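/- With h(x) = x e^{x²/2} ∫_x^∞ e^{−z²/2} dz, the second derivative satisfies h''(x) = (x²+3)h(x) − (x²+2), and hence h is concave on (0, ∞). -/

import Mathlib

open Real MeasureTheory

noncomputable def h (x : ℝ) : ℝ :=
  x * Real.exp (x ^ 2 / 2) * ∫ z in Set.Ioi x, Real.exp (-z ^ 2 / 2)

open Set Filter Topology

noncomputable def phi (x : ℝ) : ℝ := Real.exp (-x ^ 2 / 2)

lemma phi_cont : Continuous phi := by
  unfold phi; continuity

lemma phi_pos (x : ℝ) : 0 < phi x := Real.exp_pos _

lemma phi_int : Integrable phi := by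
  have := integrable_exp_neg_mul_sq (b := (1/2:ℝ)) (by norm_num)
  convert this using 2 with x
  unfold phi; ring_nf

noncomputable def Iphi (x : ℝ) : ℝ := ∫ z in Set.Ioi x, phi z

lemma hasDerivAt_phi (x : ℝ) : HasDerivAt phi (-x * phi x) x := by
  have h1 : HasDerivAt (fun y : ℝ => -y ^ 2 / 2) (-x) x := by
    have := ((hasDerivAt_pow 2 x).neg).div_const 2
    refine this.congr_deriv (Eq.symm ?_); push_cast; ring
  have := h1.exp
  refine this.congr_deriv (Eq.symm ?_)
  unfold phi; ring

lemma hasDerivAt_Iphi (x : ℝ) : HasDerivAt Iphi (-(phi x)) x := by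
  have key : ∀ y : ℝ, Iphi y =
      ((∫ z, phi z) - ∫ z in Iic (0:ℝ), phi z) - ∫ z in (0:ℝ)..y, phi z := by
    intro y
    have h1 : (∫ z in Iic y, phi z) + (∫ z in Ioi y, phi z) = ∫ z, phi z :=
      intervalIntegral.integral_Iic_add_Ioi phi_int.integrableOn phi_int.integrableOn
    have h2 : (∫ z in Iic y, phi z) - ∫ z in Iic (0:ℝ), phi z = ∫ z in (0:ℝ)..y, phi z :=
      intervalIntegral.integral_Iic_sub_Iic phi_int.integrableOn phi_int.integrableOn
    unfold Iphi; linarith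
  have hd : HasDerivAt (fun y : ℝ => ((∫ z, phi z) - ∫ z in Iic (0:ℝ), phi z)
      - ∫ z in (0:ℝ)..y, phi z) (-(phi x)) x := by
    exact (intervalIntegral.integral_hasDerivAt_right phi_int.intervalIntegrable
      (phi_cont.stronglyMeasurable.stronglyMeasurableAtFilter) phi_cont.continuousAt).const_sub _
  have : Iphi = fun y : ℝ => ((∫ z, phi z) - ∫ z in Iic (0:ℝ), phi z)
      - ∫ z in (0:ℝ)..y, phi z := funext key
  rw [this]; exact hd

lemma hasDerivAt_neg_phi (z : ℝ) : HasDerivAt (fun y => -(phi y)) (z * phi z) z := by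
  have := (hasDerivAt_phi z).neg
  refine this.congr_deriv (Eq.symm ?_); ring

lemma tendsto_phi : Tendsto phi atTop (𝓝 0) := by
  have h1 : Tendsto (fun x : ℝ => -x ^ 2 / 2) atTop atBot := by
    apply Tendsto.atBot_div_const (by norm_num)
    exact tendsto_neg_atBot_iff.mpr (tendsto_pow_atTop (by norm_num))
  exact Real.tendsto_exp_atBot.comp h1

lemma tendsto_neg_phi : Tendsto (fun y => -(phi y)) atTop (𝓝 0) := by
  simpa using tendsto_phi.neg

lemma integral_z_phi {x : ℝ} (hx : 0 ≤ x) : ∫ z in Ioi x, z * phi z = phi x := by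
  have := integral_Ioi_of_hasDerivAt_of_nonneg' (a := x) (g := fun y => -(phi y))
    (g' := fun z => z * phi z) (fun z hz => hasDerivAt_neg_phi z)
    (fun z hz => mul_nonneg (le_trans hx (le_of_lt hz)) (phi_pos z).le) tendsto_neg_phi
  rw [this]; ring

lemma integrableOn_z_phi {x : ℝ} (hx : 0 ≤ x) : IntegrableOn (fun z => z * phi z) (Ioi x) := by
  exact integrableOn_Ioi_deriv_of_nonneg' (fun z hz => hasDerivAt_neg_phi z)
    (fun z hz => mul_nonneg (le_trans hx (le_of_lt hz)) (phi_pos z).le) tendsto_neg_phi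

lemma Iphi_nonneg (x : ℝ) : 0 ≤ Iphi x :=
  setIntegral_nonneg measurableSet_Ioi (fun z _ => (phi_pos z).le)

lemma Iphi_le {x : ℝ} (hx : 0 < x) : Iphi x ≤ phi x / x := by
  have h1 : Iphi x ≤ ∫ z in Ioi x, (z / x) * phi z := by
    apply setIntegral_mono_on phi_int.integrableOn
    · have he : (fun z => (z / x) * phi z) = fun z => (z * phi z) / x :=
        funext fun z => by ring
      rw [he]; exact (integrableOn_z_phi hx.le).div_const x
    · exact measurableSet_Ioi
    · intro z hz
      have h2 : (1:ℝ) ≤ z / x := (one_le_div hx).mpr (le_of_lt hz)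
      nlinarith [phi_pos z, (phi_pos z).le]
  have h2 : ∫ z in Ioi x, (z / x) * phi z = phi x / x := by
    have : ∀ z, (z / x) * phi z = (1/x) * (z * phi z) := fun z => by ring
    simp_rw [this, integral_const_mul, integral_z_phi hx.le]; ring
  linarith

lemma tendsto_Iphi : Tendsto Iphi atTop (𝓝 0) := by
  apply squeeze_zero' (Filter.Eventually.of_forall Iphi_nonneg)
    (eventually_atTop.mpr ⟨1, fun x hx => ?_⟩) tendsto_phi
  calc Iphi x ≤ phi x / x := Iphi_le (by linarith)
  _ ≤ phi x := by rw [div_le_iff₀ (by linarith)]; nlinarith [phi_pos x]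

lemma tendsto_sq_phi : Tendsto (fun x : ℝ => x ^ 2 * phi x) atTop (𝓝 0) := by
  have h1 : Tendsto (fun x : ℝ => x ^ 2 / 2) atTop atTop :=
    (tendsto_pow_atTop (by norm_num)).atTop_div_const (by norm_num)
  have h2 := ((tendsto_pow_mul_exp_neg_atTop_nhds_zero 1).comp h1).const_mul 2
  simp only [mul_zero] at h2
  convert h2 using 2 with x
  simp only [Function.comp_apply, pow_one]
  unfold phi
  rw [show -x ^ 2 / 2 = -(x ^ 2 / 2) by ring]
  ring

noncomputable def Fm (x : ℝ) : ℝ := Iphi x - x * phi x / (x ^ 2 + 1)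

lemma hasDerivAt_Fm (x : ℝ) : HasDerivAt Fm (-(2 * phi x / (x ^ 2 + 1) ^ 2)) x := by
  have hden : x ^ 2 + 1 ≠ 0 := by positivity
  have h1 : HasDerivAt (fun y : ℝ => y * phi y) (1 * phi x + x * (-x * phi x)) x :=
    (hasDerivAt_id x).mul (hasDerivAt_phi x)
  have h2 : HasDerivAt (fun y : ℝ => y ^ 2 + 1) (2 * x) x := by
    simpa using (hasDerivAt_pow 2 x).add_const 1
  have h3 := (h1.div h2 hden)
  have h4 := (hasDerivAt_Iphi x).sub h3
  refine h4.congr_deriv (Eq.symm ?_)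
  field_simp
  ring

lemma Fm_nonneg (x : ℝ) : 0 ≤ Fm x := by
  have hanti : Antitone Fm := by
    apply antitone_of_deriv_nonpos (fun y => (hasDerivAt_Fm y).differentiableAt)
    intro y
    rw [(hasDerivAt_Fm y).deriv]
    have := phi_pos y
    simp only [neg_nonpos]
    positivity
  have htend : Tendsto Fm atTop (𝓝 0) := by
    have h2 : Tendsto (fun y : ℝ => y * phi y / (y ^ 2 + 1)) atTop (𝓝 0) := by
      apply squeeze_zero' (g := phi)
        (eventually_atTop.mpr ⟨0, fun y hy => div_nonneg (mul_nonneg hy (phi_pos y).le) (by positivity)⟩)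
        (eventually_atTop.mpr ⟨0, fun y hy => ?_⟩) tendsto_phi
      rw [div_le_iff₀ (by positivity)]
      nlinarith [phi_pos y, sq_nonneg (y - 1)]
    have := tendsto_Iphi.sub h2
    unfold Fm; simpa using this
  have hev : ∀ᶠ t in atTop, Fm t ≤ Fm x :=
    eventually_atTop.mpr ⟨x, fun t ht => hanti ht⟩
  exact le_of_tendsto htend hev


noncomputable def Gm (x : ℝ) : ℝ := (x ^ 2 + 2) * phi x - x * (x ^ 2 + 3) * Iphi x

lemma hasDerivAt_Gm (x : ℝ) : HasDerivAt Gm (-(3 * (x ^ 2 + 1) * Fm x)) x := by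
  have h1 : HasDerivAt (fun y : ℝ => (y ^ 2 + 2) * phi y)
      ((2 * x) * phi x + (x ^ 2 + 2) * (-x * phi x)) x := by
    have ha : HasDerivAt (fun y : ℝ => y ^ 2 + 2) (2 * x) x := by
      simpa using (hasDerivAt_pow 2 x).add_const 2
    exact ha.mul (hasDerivAt_phi x)
  have h2 : HasDerivAt (fun y : ℝ => y * (y ^ 2 + 3))
      (1 * (x ^ 2 + 3) + x * (2 * x)) x :=
    (hasDerivAt_id x).mul (by simpa using (hasDerivAt_pow 2 x).add_const 3)
  have h3 := h1.sub (h2.mul (hasDerivAt_Iphi x))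
  refine h3.congr_deriv (Eq.symm ?_)
  unfold Fm
  field_simp
  ring

lemma Gm_nonneg (x : ℝ) : 0 ≤ Gm x := by
  have hanti : Antitone Gm := by
    apply antitone_of_deriv_nonpos (fun y => (hasDerivAt_Gm y).differentiableAt)
    intro y
    rw [(hasDerivAt_Gm y).deriv]
    simp only [neg_nonpos]
    have h1 := Fm_nonneg y
    positivity
  have htend : Tendsto Gm atTop (𝓝 0) := by
    have h1 : Tendsto (fun y : ℝ => (y ^ 2 + 2) * phi y) atTop (𝓝 0) := by
      have := tendsto_sq_phi.add (tendsto_phi.const_mul 2)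
      simp only [add_zero, mul_zero] at this
      convert this using 2 with y
      ring
    have h2 : Tendsto (fun y : ℝ => y * (y ^ 2 + 3) * Iphi y) atTop (𝓝 0) := by
      have hub : ∀ᶠ y in atTop, y * (y ^ 2 + 3) * Iphi y ≤ y ^ 2 * phi y + 3 * phi y := by
        refine eventually_atTop.mpr ⟨1, fun y hy => ?_⟩
        have hy0 : (0:ℝ) < y := by linarith
        have h3 : Iphi y ≤ phi y / y := Iphi_le hy0
        have h4 : y * (y ^ 2 + 3) * Iphi y ≤ y * (y ^ 2 + 3) * (phi y / y) :=
          mul_le_mul_of_nonneg_left h3 (by positivity)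
        calc y * (y ^ 2 + 3) * Iphi y ≤ y * (y ^ 2 + 3) * (phi y / y) := h4
        _ = y ^ 2 * phi y + 3 * phi y := by field_simp
      have htt : Tendsto (fun y : ℝ => y ^ 2 * phi y + 3 * phi y) atTop (𝓝 0) := by
        have := tendsto_sq_phi.add (tendsto_phi.const_mul 3)
        simpa using this
      exact squeeze_zero' (eventually_atTop.mpr ⟨0, fun y hy =>
        mul_nonneg (mul_nonneg hy (by positivity)) (Iphi_nonneg y)⟩) hub htt
    have := h1.sub h2
    unfold Gm; simpa using this
  exact le_of_tendsto htend (eventually_atTop.mpr ⟨x, fun t ht => hanti ht⟩)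

lemma hasDerivAt_exp_sq (x : ℝ) :
    HasDerivAt (fun y : ℝ => Real.exp (y ^ 2 / 2)) (x * Real.exp (x ^ 2 / 2)) x := by
  have := ((hasDerivAt_pow 2 x).div_const 2).exp
  convert this using 1
  push_cast; ring

lemma exp_mul_phi (x : ℝ) : Real.exp (x ^ 2 / 2) * phi x = 1 := by
  unfold phi
  rw [← Real.exp_add, show x ^ 2 / 2 + -x ^ 2 / 2 = 0 by ring, Real.exp_zero]

lemma h_eq (y : ℝ) : h y = y * Real.exp (y ^ 2 / 2) * Iphi y := rfl

lemma hasDerivAt_h (x : ℝ) :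
    HasDerivAt h ((1 + x ^ 2) * Real.exp (x ^ 2 / 2) * Iphi x - x) x := by
  have hA : HasDerivAt (fun y : ℝ => y * Real.exp (y ^ 2 / 2))
      (1 * Real.exp (x ^ 2 / 2) + x * (x * Real.exp (x ^ 2 / 2))) x :=
    (hasDerivAt_id x).mul (hasDerivAt_exp_sq x)
  have h3 := hA.mul (hasDerivAt_Iphi x)
  have hh : h = fun y => (y * Real.exp (y ^ 2 / 2)) * Iphi y := funext h_eq
  rw [hh]
  refine h3.congr_deriv (Eq.symm ?_)
  have hexp := exp_mul_phi x
  linear_combination x * hexp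

lemma hasDerivAt_h1 (x : ℝ) :
    HasDerivAt (fun y : ℝ => (1 + y ^ 2) * Real.exp (y ^ 2 / 2) * Iphi y - y)
      ((x ^ 2 + 3) * h x - (x ^ 2 + 2)) x := by
  have hB : HasDerivAt (fun y : ℝ => (1 + y ^ 2) * Real.exp (y ^ 2 / 2))
      ((2 * x) * Real.exp (x ^ 2 / 2) + (1 + x ^ 2) * (x * Real.exp (x ^ 2 / 2))) x := by
    have hq : HasDerivAt (fun y : ℝ => 1 + y ^ 2) (2 * x) x := by
      simpa using (hasDerivAt_pow 2 x).const_add 1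
    exact hq.mul (hasDerivAt_exp_sq x)
  have h3 := (hB.mul (hasDerivAt_Iphi x)).sub (hasDerivAt_id x)
  refine h3.congr_deriv (Eq.symm ?_)
  rw [h_eq]
  have hexp := exp_mul_phi x
  linear_combination (1 + x ^ 2) * hexp

lemma deriv_h : deriv h = fun y : ℝ => (1 + y ^ 2) * Real.exp (y ^ 2 / 2) * Iphi y - y :=
  funext fun y => (hasDerivAt_h y).deriv

lemma deriv2_h (x : ℝ) : deriv (deriv h) x = (x ^ 2 + 3) * h x - (x ^ 2 + 2) := by
  rw [deriv_h]
  exact (hasDerivAt_h1 x).deriv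

lemma h2_nonpos (x : ℝ) : (x ^ 2 + 3) * h x - (x ^ 2 + 2) ≤ 0 := by
  have key : (x ^ 2 + 3) * h x - (x ^ 2 + 2) = -(Real.exp (x ^ 2 / 2) * Gm x) := by
    rw [h_eq]
    unfold Gm
    have hexp := exp_mul_phi x
    linear_combination (x ^ 2 + 2) * hexp
  rw [key]
  have h1 := Gm_nonneg x
  have h2 := Real.exp_pos (x ^ 2 / 2)
  nlinarith

theorem stmt_16 :
    (∀ x : ℝ, 0 < x →
      deriv (deriv h) x = (x ^ 2 + 3) * h x - (x ^ 2 + 2)) ∧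
    ConcaveOn ℝ (Set.Ioi (0 : ℝ)) h := by
  constructor
  · exact fun x _ => deriv2_h x
  · have hdiff : Differentiable ℝ h := fun x => (hasDerivAt_h x).differentiableAt
    apply concaveOn_of_deriv2_nonpos (convex_Ioi 0) hdiff.continuous.continuousOn
      hdiff.differentiableOn
    · rw [deriv_h]
      exact (Differentiable.differentiableOn (fun x => (hasDerivAt_h1 x).differentiableAt))
    · intro x hx
      have : deriv^[2] h x = deriv (deriv h) x := by
        simp [Function.iterate_succ_apply']
      rw [this, deriv2_h]
      exact h2_nonpos x
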